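/- Let D ⊆ ℂ be open, let Φ : D → M₂(ℂ) be differentiable with det Φ(λ) ≠ 0 for all λ ∈ D, and let f : D → ℂ be differentiable with f(λ)²·det Φ(λ) = 1 for all λ ∈ D. Set Ψ(λ) = f(λ)·Φ(λ). Then for every λ ∈ D: (1/2)·tr((Ψ′(λ)Ψ(λ)⁻¹)²) = −det(Φ′(λ))/det Φ(λ) + (1/4)·((det Φ)′(λ)/det Φ(λ))², where Φ′ and Ψ′ denote entrywise derivatives and (det Φ)′ the derivative of the determinant function. Equivalently, since det Ψ ≡ 1 forces tr(Ψ′Ψ⁻¹) = 0, the left-hand side equals −det(Ψ′(λ)Ψ(λ)⁻¹). -/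

import Mathlib

/-!
Statement 8: for the unimodular normalization `Ψ = (det Φ)^{−1/2}·Φ` of a
matrix-valued function `Φ`, one has
`(1/2)tr((Ψ′Ψ⁻¹)²) = −det(Φ′)/det Φ + (1/4)((det Φ)′/det Φ)²`, and this also
equals `−det(Ψ′Ψ⁻¹)`.
-/

attribute [local instance] Matrix.normedAddCommGroup Matrix.normedSpace

theorem half_trace_square_of_unimodular_normalization
    (D : Set ℂ) (hD : IsOpen D)
    (Φ : ℂ → Matrix (Fin 2) (Fin 2) ℂ) (hΦ : DifferentiableOn ℂ Φ D)
    (hdet : ∀ z ∈ D, Matrix.det (Φ z) ≠ 0)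
    (f : ℂ → ℂ) (hf : DifferentiableOn ℂ f D)
    (hff : ∀ z ∈ D, f z ^ 2 * Matrix.det (Φ z) = 1)
    (Ψ : ℂ → Matrix (Fin 2) (Fin 2) ℂ) (hΨ : Ψ = fun z => f z • Φ z) :
    ∀ z ∈ D,
      (1 / 2 : ℂ) * Matrix.trace ((deriv Ψ z * (Ψ z)⁻¹) ^ 2) =
          -Matrix.det (deriv Φ z) / Matrix.det (Φ z) +
            (1 / 4) * (deriv (fun w => Matrix.det (Φ w)) z /
              Matrix.det (Φ z)) ^ 2 ∧
      (1 / 2 : ℂ) * Matrix.trace ((deriv Ψ z * (Ψ z)⁻¹) ^ 2) =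
          -Matrix.det (deriv Ψ z * (Ψ z)⁻¹) := by
  intro z hz
  have hzD : D ∈ nhds z := hD.mem_nhds hz
  have hΦz : HasDerivAt Φ (deriv Φ z) z := (hΦ.differentiableAt hzD).hasDerivAt
  have hfz : HasDerivAt f (deriv f z) z := (hf.differentiableAt hzD).hasDerivAt
  set A : Matrix (Fin 2) (Fin 2) ℂ := Φ z with hA
  set B : Matrix (Fin 2) (Fin 2) ℂ := deriv Φ z with hB
  set a : ℂ := f z with ha
  set a' : ℂ := deriv f z with ha'
  have hDet : A.det ≠ 0 := hdet z hz
  have h1 : a ^ 2 * A.det = 1 := hff z hz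
  have hent : ∀ i j, HasDerivAt (fun w => Φ w i j) (B i j) z := fun i j =>
    hasDerivAt_pi.mp (hasDerivAt_pi.mp hΦz i) j
  have hdetd : HasDerivAt (fun w => (Φ w).det)
      (B 0 0 * A 1 1 + A 0 0 * B 1 1 - (B 0 1 * A 1 0 + A 0 1 * B 1 0)) z := by
    have : HasDerivAt (fun w => Φ w 0 0 * Φ w 1 1 - Φ w 0 1 * Φ w 1 0)
        ((B 0 0 * A 1 1 + A 0 0 * B 1 1) - (B 0 1 * A 1 0 + A 0 1 * B 1 0)) z :=
      ((hent 0 0).mul (hent 1 1)).sub ((hent 0 1).mul (hent 1 0))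
    simpa only [Matrix.det_fin_two] using this
  set d : ℂ := B 0 0 * A 1 1 + A 0 0 * B 1 1 - (B 0 1 * A 1 0 + A 0 1 * B 1 0) with hd
  have hderiv_det : deriv (fun w => (Φ w).det) z = d := hdetd.deriv
  -- differentiate the constraint
  have hgd : HasDerivAt (fun w => f w ^ 2 * (Φ w).det)
      ((↑2 * f z ^ 1 * a') * A.det + a ^ 2 * d) z := (hfz.pow 2).mul hdetd
  have hconst : deriv (fun w => f w ^ 2 * (Φ w).det) z = 0 := by
    have hev : (fun w => f w ^ 2 * (Φ w).det) =ᶠ[nhds z] fun _ => (1 : ℂ) :=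
      Filter.eventually_of_mem hzD fun w hw => hff w hw
    rw [hev.deriv_eq]; exact deriv_const z 1
  have h2 : (2 * a * a') * A.det + a ^ 2 * d = 0 := by
    have h := hgd.deriv
    rw [hconst] at h
    rw [ha]
    linear_combination -h
  -- derivative of Ψ and inverse of Ψ
  have hΨd : deriv Ψ z = a • B + a' • A := by
    rw [hΨ]; exact (hfz.smul hΦz).deriv
  have hdetΨ : (Ψ z).det = 1 := by
    rw [hΨ]
    simp only [Matrix.det_smul, Fintype.card_fin]
    exact h1
  have hinv : (Ψ z)⁻¹ = (a • A).adjugate := by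
    rw [Matrix.inv_def, hdetΨ, hΨ]
    simp
    rfl
  have hΨz : Ψ z = a • A := by rw [hΨ]
  rw [hΨd, hinv]
  set M : Matrix (Fin 2) (Fin 2) ℂ := (a • B + a' • A) * (a • A).adjugate with hM
  -- trace of M is zero
  have htr : M 0 0 + M 1 1 = 0 := by
    simp only [hM, Matrix.adjugate_fin_two, Matrix.mul_apply, Fin.sum_univ_two,
      Matrix.add_apply, Matrix.smul_apply, Matrix.of_apply, Matrix.cons_val',
      Matrix.cons_val_zero, Matrix.cons_val_one, Matrix.head_cons, Matrix.head_fin_const,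
      Matrix.empty_val', Matrix.cons_val_fin_one, smul_eq_mul]
    have h2' := h2
    rw [Matrix.det_fin_two] at h2'
    linear_combination h2'
  have h1' := h1
  rw [Matrix.det_fin_two] at h1'
  have h2' := h2
  rw [Matrix.det_fin_two] at h2'
  have hDet' : A 0 0 * A 1 1 - A 0 1 * A 1 0 ≠ 0 := by
    rw [← Matrix.det_fin_two]; exact hDet
  constructor
  · rw [hderiv_det]
    simp only [hM, pow_two, Matrix.trace_fin_two, Matrix.det_fin_two, Matrix.adjugate_fin_two,
      Matrix.mul_apply, Fin.sum_univ_two, Matrix.add_apply, Matrix.smul_apply, Matrix.of_apply,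
      Matrix.cons_val', Matrix.cons_val_zero, Matrix.cons_val_one, Matrix.head_cons,
      Matrix.empty_val', Matrix.cons_val_fin_one, smul_eq_mul, hd]
    rw [hd] at h2'
    field_simp
    linear_combination
      (2 * (A 0 0 * A 1 1 - A 0 1 * A 1 0) ^ 2 *
        (2 * a * a' * (A 0 0 * A 1 1 - A 0 1 * A 1 0) +
          a ^ 2 * (B 0 0 * A 1 1 + A 0 0 * B 1 1 - (B 0 1 * A 1 0 + A 0 1 * B 1 0)))) * h2' +
      ((2 * (B 0 0 * A 1 1 + A 0 0 * B 1 1 - (B 0 1 * A 1 0 + A 0 1 * B 1 0)) ^ 2 *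
          1 -
        8 * (B 0 0 * B 1 1 - B 0 1 * B 1 0) * (A 0 0 * A 1 1 - A 0 1 * A 1 0)) *
        (a ^ 2 * (A 0 0 * A 1 1 - A 0 1 * A 1 0) + 1)) * h1'
  · simp only [pow_two, Matrix.trace_fin_two, Matrix.det_fin_two, Matrix.mul_apply,
      Fin.sum_univ_two]
    linear_combination (1/2) * (M 0 0 + M 1 1) * htr
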